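/- Let Γ = ℤ and define f : Q₂ → ℤ by f((x_n)_n) = Σ_n x_n, identifying Q₂ with finitely supported 0-1 sequences. Then for every v ∈ V, the map x ↦ f(x) − f(v^{-1}x) is locally constant, and hence f normalizes G = Lℤ ⋊ V inside (∏_{Q₂}ℤ) ⋊ V while f itself takes infinitely many values. -/

import Mathlib

/-! Basic setup: the Cantor space, prefix replacement, Thompson's group `V`,
slopes, dyadic rationals, standard dyadic partitions, locally constant maps,
and the permutation model of the twisted fraction groups `LΓ ⋊ V`. -/

abbrev Cantor : Type := ℕ → Bool

/-- Concatenation of a finite word with an infinite sequence. -/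
def cat (w : List Bool) (x : Cantor) : Cantor :=
  fun n => if n < w.length then w.getD n false else x (n - w.length)

/-- The standard dyadic interval (cylinder) associated to a finite word. -/
def cyl (w : List Bool) : Set Cantor := {x | ∃ y : Cantor, x = cat w y}

/-- Membership in Thompson's group `V`: a homeomorphism of the Cantor space which is
everywhere locally given by prefix replacement. -/
def memV (v : Cantor ≃ₜ Cantor) : Prop :=
  ∀ x : Cantor, ∃ (m w : List Bool) (y : Cantor),
    x = cat m y ∧ ∀ z : Cantor, v (cat m z) = cat w z

/-- `HasLogSlope v x k` : `k = log₂ v'(x)`, base-2 logarithm of the slope of `v` at `x`. -/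
def HasLogSlope (v : Cantor ≃ₜ Cantor) (x : Cantor) (k : ℤ) : Prop :=
  ∃ (m w : List Bool) (y : Cantor),
    x = cat m y ∧ (∀ z : Cantor, v (cat m z) = cat w z) ∧
      k = (m.length : ℤ) - (w.length : ℤ)

open Classical in
noncomputable def logSlope (v : Cantor ≃ₜ Cantor) (x : Cantor) : ℤ :=
  if h : ∃ k : ℤ, HasLogSlope v x k then h.choose else 0

/-- The eventually periodic sequence `c∞ = c·c·c⋯`. -/
def tailSeq (c : List Bool) : Cantor := fun n => c.getD (n % c.length) false

/-- `x` lies in the tail equivalence class of the word `c`, i.e. `x = y·c∞`. -/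
def InTailClass (x : Cantor) (c : List Bool) : Prop :=
  ∃ y : List Bool, x = cat y (tailSeq c)

/-- `x` is eventually periodic (a rational point of the Cantor space). -/
def EvPeriodic (x : Cantor) : Prop :=
  ∃ (y c : List Bool), c ≠ [] ∧ x = cat y (tailSeq c)

/-- A prime word: a nonempty word which is not a proper power of a word. -/
def PrimeWord (c : List Bool) : Prop :=
  c ≠ [] ∧ ∀ (d : List Bool) (k : ℕ), 2 ≤ k → c ≠ (List.replicate k d).flatten

/-- `conjH φ v = φ ∘ v ∘ φ⁻¹`. -/
def conjH (φ v : Cantor ≃ₜ Cantor) : Cantor ≃ₜ Cantor := φ.symm.trans (v.trans φ)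

/-- `φ` normalizes Thompson's group `V` inside `Homeo(𝔠)` : `φ V φ⁻¹ = V`. -/
def NormalizesV (φ : Cantor ≃ₜ Cantor) : Prop :=
  (conjH φ) '' {v | memV v} = {v | memV v}

/-- The copy of the dyadic rationals `Q₂ ⊂ 𝔠` : finitely supported sequences. -/
def InQ2 (x : Cantor) : Prop := ∃ n : ℕ, ∀ m, n ≤ m → x m = false

def zeroSeq : Cantor := fun _ => false

/-- A standard dyadic partition of the Cantor space. -/
def IsSDP (P : Finset (List Bool)) : Prop :=
  ∀ x : Cantor, ∃! w : List Bool, w ∈ P ∧ x ∈ cyl w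

/-- Locally constant map: constant on each piece of some standard dyadic partition. -/
def IsLC {Γ : Type*} (f : Cantor → Γ) : Prop :=
  ∃ P : Finset (List Bool), IsSDP P ∧ ∀ w ∈ P, ∀ y z : Cantor, f (cat w y) = f (cat w z)

/-- `h` agrees on `Q₂` with (the restriction of) a locally constant map. -/
def AgreesOnQ2WithLC {Γ : Type*} (h : Cantor → Γ) : Prop :=
  ∃ b : Cantor → Γ, IsLC b ∧ ∀ x, InQ2 x → h x = b x

section GroupPart
variable {Γ : Type*} [Group Γ]

/-- `alphaWord α₀ α₁ (m₁⋯m_k) = α_{m_k} ∘ ⋯ ∘ α_{m₁}`. -/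
def alphaWord (α₀ α₁ : Γ ≃* Γ) (m : List Bool) : Γ ≃* Γ :=
  m.foldl (fun acc b => acc.trans (if b then α₁ else α₀)) (MulEquiv.refl Γ)

open Classical in
/-- The twisting automorphism `τ_{v,x} = α_{v(I)}⁻¹ ∘ α_I` for a standard dyadic
interval `I` containing `x` and adapted to `v`. -/
noncomputable def tauEquiv (α₀ α₁ : Γ ≃* Γ) (v : Cantor ≃ₜ Cantor) (x : Cantor) : Γ ≃* Γ :=
  if h : ∃ p : List Bool × List Bool, x ∈ cyl p.1 ∧ ∀ z : Cantor, v (cat p.1 z) = cat p.2 z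
  then (alphaWord α₀ α₁ h.choose.1).trans (alphaWord α₀ α₁ h.choose.2).symm
  else MulEquiv.refl Γ

/-- The element `a·v` of the twisted `LΓ ⋊ V`, realized as the permutation
`(x,g) ↦ (v x, a(v x) · τ_{v,x}(g))` of `𝔠 × Γ`. -/
noncomputable def permOf (α₀ α₁ : Γ ≃* Γ) (a : Cantor → Γ) (v : Cantor ≃ₜ Cantor) :
    Equiv.Perm (Cantor × Γ) where
  toFun p := (v p.1, a (v p.1) * tauEquiv α₀ α₁ v p.1 p.2)
  invFun p := (v.symm p.1, (tauEquiv α₀ α₁ v (v.symm p.1)).symm ((a p.1)⁻¹ * p.2))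
  left_inv := by rintro ⟨x, g⟩; simp
  right_inv := by rintro ⟨x, g⟩; simp

end GroupPart

/-- The twisted fraction group `G = LΓ ⋊ V` of the triple `(Γ, α₀, α₁)`,
as a group of permutations of `𝔠 × Γ`. -/
noncomputable def Gsub (Γ : Type*) [Group Γ] (α₀ α₁ : Γ ≃* Γ) :
    Subgroup (Equiv.Perm (Cantor × Γ)) :=
  Subgroup.closure {p | ∃ a v, IsLC a ∧ memV v ∧ p = permOf α₀ α₁ a v}

/-- The untwisted case `α₀ = α₁ = id`. -/
noncomputable def permOfU {Γ : Type*} [Group Γ] (a : Cantor → Γ) (v : Cantor ≃ₜ Cantor) :=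
  permOf (MulEquiv.refl Γ) (MulEquiv.refl Γ) a v

/-- The untwisted fraction group `G = LΓ ⋊ V`. -/
noncomputable def GsubU (Γ : Type*) [Group Γ] := Gsub Γ (MulEquiv.refl Γ) (MulEquiv.refl Γ)

/-- `f ∈ N_{K̄}(G)` : the element `f` of `K̄ = ∏_{Q₂}Γ` normalizes `G = LΓ ⋊ V`
(untwisted case), i.e. `f·a·(f^v)⁻¹` and `f⁻¹·a·f^v` are locally constant on `Q₂`. -/
def InNormKbar {Γ : Type*} [Group Γ] (f : Cantor → Γ) : Prop :=
  ∀ (a : Cantor → Γ) (v : Cantor ≃ₜ Cantor), IsLC a → memV v →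
    AgreesOnQ2WithLC (fun x => f x * a x * (f (v.symm x))⁻¹) ∧
    AgreesOnQ2WithLC (fun x => (f x)⁻¹ * a x * f (v.symm x))

open Classical in
/-- The map `f : Q₂ → ℤ`, `(x_n)_n ↦ Σ_n x_n`, on finitely supported sequences. -/
noncomputable def fSum : Cantor → ℤ := fun x =>
  if h : ∃ n : ℕ, ∀ m, n ≤ m → x m = false
  then ∑ i ∈ Finset.range h.choose, (if x i then 1 else 0)
  else 0

namespace SumDigitsAux

lemma cat_lt {w : List Bool} {x : Cantor} {n : ℕ} (h : n < w.length) :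
    cat w x n = w.getD n false := if_pos h

lemma cat_ge {w : List Bool} {x : Cantor} {n : ℕ} (h : w.length ≤ n) :
    cat w x n = x (n - w.length) := if_neg (by omega)

lemma cat_cat (w r : List Bool) (z : Cantor) : cat w (cat r z) = cat (w ++ r) z := by
  funext n
  rcases lt_or_ge n w.length with h | h
  · rw [cat_lt h, cat_lt (by simp only [List.length_append]; omega), List.getD_append _ _ _ _ h]
  · rcases lt_or_ge n (w.length + r.length) with h2 | h2
    · rw [cat_ge h, cat_lt (by omega), cat_lt (by simp only [List.length_append]; omega),
        List.getD_append_right _ _ _ _ h]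
    · rw [cat_ge h, cat_ge (by omega), cat_ge (by simp only [List.length_append]; omega)]
      congr 1
      simp only [List.length_append]
      omega

lemma mem_cyl_iff {x : Cantor} {w : List Bool} :
    x ∈ cyl w ↔ ∀ i, i < w.length → x i = w.getD i false := by
  constructor
  · rintro ⟨y, rfl⟩ i hi; exact cat_lt hi
  · intro h
    refine ⟨fun n => x (n + w.length), ?_⟩
    funext n
    rcases lt_or_ge n w.length with hn | hn
    · rw [cat_lt hn]; exact h n hn
    · rw [cat_ge hn]; congr 1; omega

lemma isOpen_cyl (w : List Bool) : IsOpen (cyl w) := by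
  have hset : cyl w = ⋂ i ∈ Finset.range w.length, (fun x : Cantor => x i) ⁻¹' {w.getD i false} := by
    ext x; simp [mem_cyl_iff]
  rw [hset]
  exact isOpen_biInter_finset fun i _ =>
    (continuous_apply i).isOpen_preimage _ (isOpen_discrete _)

/-- Digit sum of a word. -/
def ds (w : List Bool) : ℤ := ∑ i ∈ Finset.range w.length, (if w.getD i false then 1 else 0)

lemma fSum_eq {x : Cantor} {N : ℕ} (h : ∀ m, N ≤ m → x m = false) :
    fSum x = ∑ i ∈ Finset.range N, (if x i then (1:ℤ) else 0) := by
  have hx : ∃ n : ℕ, ∀ m, n ≤ m → x m = false := ⟨N, h⟩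
  rw [fSum, dif_pos hx]
  have aux : ∀ K M : ℕ, K ≤ M → (∀ m, K ≤ m → x m = false) →
      ∑ i ∈ Finset.range M, (if x i then (1:ℤ) else 0)
        = ∑ i ∈ Finset.range K, (if x i then (1:ℤ) else 0) := by
    intro K M hKM hK
    symm
    apply Finset.sum_subset (Finset.range_subset_range.2 hKM)
    intro i hi hni
    simp only [Finset.mem_range] at hi hni
    rw [hK i (by omega)]
    simp
  rw [← aux hx.choose (max hx.choose N) (le_max_left _ _) hx.choose_spec,
      ← aux N (max hx.choose N) (le_max_right _ _) h]

lemma fSum_cat (w : List Bool) {z : Cantor} (hz : InQ2 z) :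
    fSum (cat w z) = ds w + fSum z := by
  obtain ⟨n, hn⟩ := hz
  have h1 : ∀ m, (w.length + n) ≤ m → cat w z m = false := by
    intro m hm
    rw [cat_ge (by omega)]
    exact hn _ (by omega)
  rw [fSum_eq h1, fSum_eq hn, ds]
  rw [Finset.range_eq_Ico, ← Finset.sum_Ico_consecutive _ (Nat.zero_le w.length) (by omega)]
  congr 1
  · rw [← Finset.range_eq_Ico]
    apply Finset.sum_congr rfl
    intro i hi
    rw [cat_lt (Finset.mem_range.1 hi)]
  · rw [Finset.sum_Ico_eq_sum_range]
    have : w.length + n - w.length = n := by omega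
    rw [this]
    apply Finset.sum_congr rfl
    intro i _
    have h3 : w.length + i - w.length = i := by omega
    rw [cat_ge (by omega), h3]

/-- The length-`N` prefix of `x`, as a word. -/
def word (x : Cantor) (N : ℕ) : List Bool := List.ofFn fun i : Fin N => x i

@[simp] lemma word_length (x : Cantor) (N : ℕ) : (word x N).length = N := List.length_ofFn

lemma word_getD {x : Cantor} {N i : ℕ} (h : i < N) : (word x N).getD i false = x i := by
  rw [List.getD_eq_getElem _ _ (by simpa [word] using h)]
  simp [word]

lemma cat_word (x : Cantor) (N : ℕ) : cat (word x N) (fun n => x (n + N)) = x := by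
  funext n
  rcases lt_or_ge n N with h | h
  · rw [cat_lt (by simpa using h), word_getD h]
  · rw [cat_ge (by simpa using h)]
    simp only [word_length]
    congr 1
    omega

lemma word_cat (u : List Bool) (y : Cantor) : word (cat u y) u.length = u := by
  apply List.ext_getElem (by simp)
  intro i h1 h2
  simp only [word, List.getElem_ofFn]
  rw [cat_lt h2, List.getD_eq_getElem _ _ h2]

lemma inQ2_shift {x : Cantor} (h : InQ2 x) (N : ℕ) : InQ2 (fun n => x (n + N)) := by
  obtain ⟨n, hn⟩ := h
  exact ⟨n, fun m hm => hn _ (by omega)⟩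

lemma cyl_prefix {u w : List Bool} {x : Cantor} (hx : x ∈ cyl w) (hxu : x ∈ cyl u)
    (h : w.length ≤ u.length) : ∃ r, u = w ++ r := by
  refine ⟨u.drop w.length, ?_⟩
  nth_rewrite 1 [← List.take_append_drop w.length u]
  congr 1
  apply List.ext_getElem (by simp; omega)
  intro i h1 h2
  have hi : i < w.length := h2
  have e1 := mem_cyl_iff.1 hx i hi
  have e2 := mem_cyl_iff.1 hxu i (by omega)
  rw [List.getD_eq_getElem _ _ hi] at e1
  rw [List.getD_eq_getElem _ _ (by omega : i < u.length)] at e2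
  simp only [List.getElem_take]
  rw [← e2, e1]

/-- All words of length `N`. -/
noncomputable def PN (N : ℕ) : Finset (List Bool) :=
  Finset.image (fun f : Fin N → Bool => List.ofFn f) Finset.univ

lemma word_mem_PN (x : Cantor) (N : ℕ) : word x N ∈ PN N :=
  Finset.mem_image_of_mem _ (Finset.mem_univ _)

lemma length_of_mem_PN {w : List Bool} {N : ℕ} (h : w ∈ PN N) : w.length = N := by
  simp only [PN, Finset.mem_image] at h
  obtain ⟨f, -, rfl⟩ := h
  simp

lemma isSDP_PN (N : ℕ) : IsSDP (PN N) := by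
  intro x
  refine ⟨word x N, ⟨word_mem_PN x N, ⟨_, (cat_word x N).symm⟩⟩, ?_⟩
  rintro w ⟨hwP, y, rfl⟩
  have hl := length_of_mem_PN hwP
  rw [← hl]
  exact (word_cat w y).symm

lemma isLC_of_constN {Γ : Type*} {f : Cantor → Γ} {N : ℕ}
    (h : ∀ u : List Bool, u.length = N → ∀ y z, f (cat u y) = f (cat u z)) : IsLC f :=
  ⟨PN N, isSDP_PN N, fun w hw => h w (length_of_mem_PN hw)⟩

lemma constN_mono {Γ : Type*} {f : Cantor → Γ} {N N' : ℕ} (h : N ≤ N')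
    (hf : ∀ u : List Bool, u.length = N → ∀ y z, f (cat u y) = f (cat u z)) :
    ∀ u : List Bool, u.length = N' → ∀ y z, f (cat u y) = f (cat u z) := by
  intro u hu y z
  rw [← List.take_append_drop N u, ← cat_cat, ← cat_cat]
  exact hf _ (by simp [List.length_take]; omega) _ _

lemma exists_N_of_isLC {Γ : Type*} {f : Cantor → Γ} (hf : IsLC f) :
    ∃ N, ∀ u : List Bool, u.length = N → ∀ y z, f (cat u y) = f (cat u z) := by
  obtain ⟨P, hP, hconst⟩ := hf
  refine ⟨P.sup List.length, ?_⟩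
  intro u hu y z
  obtain ⟨w, ⟨hwP, hwcyl⟩, -⟩ := hP (cat u y)
  have hwl : w.length ≤ u.length := hu ▸ Finset.le_sup hwP
  obtain ⟨r, hr⟩ := cyl_prefix hwcyl ⟨y, rfl⟩ hwl
  calc f (cat u y) = f (cat w (cat r y)) := by rw [cat_cat, ← hr]
    _ = f (cat w (cat r z)) := hconst w hwP _ _
    _ = f (cat u z) := by rw [cat_cat, ← hr]

lemma main_aux {v : Cantor ≃ₜ Cantor} (hv : memV v) :
    ∃ (N : ℕ) (b : Cantor → ℤ),
      (∀ u : List Bool, u.length = N → ∀ y z, b (cat u y) = b (cat u z)) ∧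
      (∀ x, InQ2 x → fSum x - fSum (v.symm x) = b x) := by
  classical
  have H : ∀ x : Cantor, ∃ w : List Bool, x ∈ cyl w ∧ ∃ m, ∀ z, v.symm (cat w z) = cat m z := by
    intro x
    obtain ⟨m, w, y, h1, h2⟩ := hv (v.symm x)
    refine ⟨w, ⟨y, ?_⟩, m, fun z => ?_⟩
    · have : v (v.symm x) = v (cat m y) := by rw [← h1]
      rw [v.apply_symm_apply, h2] at this
      exact this
    · rw [← h2 z, v.symm_apply_apply]
  choose w hw hrepl using H
  have hcover : (Set.univ : Set Cantor) ⊆ ⋃ x, cyl (w x) :=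
    fun x _ => Set.mem_iUnion.2 ⟨x, hw x⟩
  obtain ⟨t, ht⟩ := isCompact_univ.elim_finite_subcover (fun x => cyl (w x))
    (fun x => isOpen_cyl _) hcover
  set N := t.sup (fun x => (w x).length) with hN
  have key : ∀ u : List Bool, u.length = N → ∃ m, ∀ z, v.symm (cat u z) = cat m z := by
    intro u hu
    have hmem : cat u zeroSeq ∈ ⋃ x ∈ t, cyl (w x) := ht (Set.mem_univ _)
    simp only [Set.mem_iUnion] at hmem
    obtain ⟨p, hpt, hpcyl⟩ := hmem
    have hlen : (w p).length ≤ u.length := by rw [hu]; exact Finset.le_sup (f := fun x => (w x).length) hpt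
    obtain ⟨r, hr⟩ := cyl_prefix hpcyl ⟨zeroSeq, rfl⟩ hlen
    obtain ⟨m, hm⟩ := hrepl p
    exact ⟨m ++ r, fun z => by rw [hr, ← cat_cat, hm, cat_cat]⟩
  let mu : List Bool → List Bool :=
    fun u => if h : ∃ m, ∀ z, v.symm (cat u z) = cat m z then h.choose else []
  have hmu : ∀ u : List Bool, u.length = N → ∀ z, v.symm (cat u z) = cat (mu u) z := by
    intro u hu z
    have h := key u hu
    simp only [mu, dif_pos h]
    exact h.choose_spec z
  refine ⟨N, fun x => ds (word x N) - ds (mu (word x N)), ?_, ?_⟩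
  · intro u hu y z
    have h1 : word (cat u y) N = u := by rw [← hu]; exact word_cat u y
    have h2 : word (cat u z) N = u := by rw [← hu]; exact word_cat u z
    simp only [h1, h2]
  · intro x hx
    have hz : InQ2 (fun n => x (n + N)) := inQ2_shift hx N
    have e1 : fSum x = ds (word x N) + fSum (fun n => x (n + N)) := by
      conv_lhs => rw [← cat_word x N]
      exact fSum_cat _ hz
    have e2 : fSum (v.symm x) = ds (mu (word x N)) + fSum (fun n => x (n + N)) := by
      conv_lhs => rw [← cat_word x N, hmu (word x N) (word_length x N)]
      exact fSum_cat _ hz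
    rw [e1, e2]
    ring

end SumDigitsAux

/-- For `Γ = ℤ` and `f((x_n)_n) = Σ_n x_n` on `Q₂`, the map
`x ↦ f(x) − f(v⁻¹x)` is locally constant for every `v ∈ V`; hence `f` normalizes
`G = Lℤ ⋊ V` inside `(∏_{Q₂}ℤ) ⋊ V`, while `f` itself takes infinitely many values. -/
theorem sum_of_digits_normalizes :
    (∀ v : Cantor ≃ₜ Cantor, memV v →
      AgreesOnQ2WithLC (fun x => fSum x - fSum (v.symm x))) ∧
    (∀ (a : Cantor → ℤ) (v : Cantor ≃ₜ Cantor), IsLC a → memV v →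
      AgreesOnQ2WithLC (fun x => fSum x + a x - fSum (v.symm x))) ∧
    Set.Infinite (fSum '' {x | InQ2 x}) := by
  open SumDigitsAux in
  refine ⟨?_, ?_, ?_⟩
  · intro v hv
    obtain ⟨N, b, hb, hagree⟩ := main_aux hv
    exact ⟨b, isLC_of_constN hb, fun x hx => hagree x hx⟩
  · intro a v ha hv
    obtain ⟨N, b, hb, hagree⟩ := main_aux hv
    obtain ⟨Na, hNa⟩ := exists_N_of_isLC ha
    refine ⟨fun x => b x + a x, ?_, fun x hx => ?_⟩
    · apply isLC_of_constN (N := max N Na)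
      intro u hu y z
      have h1 := constN_mono (le_max_left N Na) hb u hu y z
      have h2 := constN_mono (le_max_right N Na) hNa u hu y z
      simp only [h1, h2]
    · have := hagree x hx
      simp only []
      omega
  · apply Set.infinite_of_injective_forall_mem (f := fun n : ℕ => (n : ℤ))
    · exact Nat.cast_injective
    · intro n
      refine ⟨cat (List.replicate n true) zeroSeq, ⟨n, fun m hm => ?_⟩, ?_⟩
      · rw [cat_ge (by simpa using hm)]
        rfl
      · rw [fSum_cat (z := zeroSeq) _ ⟨0, fun m _ => rfl⟩]
        have h0 : fSum zeroSeq = 0 := by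
          rw [fSum_eq (x := zeroSeq) (N := 0) (fun m _ => rfl)]
          simp
        have hds : ds (List.replicate n true) = n := by
          rw [ds, List.length_replicate]
          have hterm : ∀ i ∈ Finset.range n,
              (if (List.replicate n true).getD i false then (1:ℤ) else 0) = 1 := by
            intro i hi
            rw [List.getD_eq_getElem _ _ (by simpa using Finset.mem_range.1 hi),
              List.getElem_replicate]
            simp
          rw [Finset.sum_congr rfl hterm]
          simp
        rw [h0, hds, add_zero]
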